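/- Let n be a composite number and let Z_n be the cyclic group of order n. Set θ = arccos( (2n^3 + 27φ(n)^2 + 27φ(n)) / (2√((n^2 + 9φ(n))^3)) ), where φ is Euler's totient function; then 0 < θ < π/2, and the multiset of roots of the characteristic polynomial of the distance matrix of the strong power graph P_s(Z_n) consists of -1 with multiplicity n-3 together with the three pairwise distinct simple roots (n - 3 + 2cos(θ/3)·√(n^2 + 9φ(n)))/3, (n - 3 + 2cos((θ+2π)/3)·√(n^2 + 9φ(n)))/3, and (n - 3 + 2cos((θ-2π)/3)·√(n^2 + 9φ(n)))/3. -/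

import Mathlib

/-- The strong power graph of the cyclic group `ZMod n` (written additively):
two distinct vertices `x` and `y` are adjacent iff `a • x = b • y` for some
positive integers `a, b < n`. -/
def strongPowerGraphZ (n : ℕ) : SimpleGraph (ZMod n) where
  Adj x y := x ≠ y ∧ ∃ a b : ℕ, 0 < a ∧ a < n ∧ 0 < b ∧ b < n ∧ a • x = b • y
  symm := by
    constructor
    rintro x y ⟨h, a, b, ha, ha', hb, hb', hab⟩
    exact ⟨h.symm, b, a, hb, hb', ha, ha', hab.symm⟩
  loopless := by
    constructor
    rintro x ⟨h, -⟩
    exact h rfl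

/-- The distance matrix (with real entries) of the strong power graph of `ZMod n`. -/
noncomputable def distMatrixZ (n : ℕ) [NeZero n] : Matrix (ZMod n) (ZMod n) ℝ :=
  Matrix.of fun i j => ((strongPowerGraphZ n).dist i j : ℝ)

open Classical in
/-- The adjacency matrix (with real entries) of the strong power graph of `ZMod n`. -/
noncomputable def adjMatrixZ (n : ℕ) [NeZero n] : Matrix (ZMod n) (ZMod n) ℝ :=
  Matrix.of fun i j => if (strongPowerGraphZ n).Adj i j then 1 else 0

section Adj
variable {n : ℕ} [NeZero n]

lemma spg_ann (hn : 2 ≤ n) {y : ZMod n} (hy0 : y ≠ 0) (hyu : ¬ IsUnit y) :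
    ∃ b : ℕ, 0 < b ∧ b < n ∧ b • y = 0 := by
  have hn0 : n ≠ 0 := NeZero.ne n
  set g := Nat.gcd y.val n with hg
  have hgy : g ∣ y.val := Nat.gcd_dvd_left _ _
  have hgn : g ∣ n := Nat.gcd_dvd_right _ _
  have hcast : ((y.val : ℕ) : ZMod n) = y := ZMod.natCast_rightInverse y
  have hg1 : g ≠ 1 := by
    intro h
    exact hyu (by rw [← hcast]; exact (ZMod.isUnit_iff_coprime _ _).2 h)
  have hgpos : 0 < g := Nat.gcd_pos_of_pos_right _ (Nat.pos_of_ne_zero hn0)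
  have hg2 : 2 ≤ g := by omega
  refine ⟨n / g, Nat.div_pos (Nat.le_of_dvd (Nat.pos_of_ne_zero hn0) hgn) hgpos,
    Nat.div_lt_self (Nat.pos_of_ne_zero hn0) hg2, ?_⟩
  obtain ⟨k, hk⟩ := hgy
  have : (n / g) * y.val = n * k := by
    rw [hk, ← Nat.mul_assoc, Nat.div_mul_cancel hgn]
  calc (n / g) • y = (((n / g) * y.val : ℕ) : ZMod n) := by
        rw [Nat.cast_mul, hcast, nsmul_eq_mul]
    _ = ((n * k : ℕ) : ZMod n) := by rw [this]
    _ = 0 := by simp [(ZMod.natCast_eq_zero_iff _ _).2 ⟨k, rfl⟩]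

lemma spg_reach {x y : ZMod n} (hx : IsUnit x) (hy0 : y ≠ 0) :
    ∃ a : ℕ, 0 < a ∧ a < n ∧ a • x = y := by
  obtain ⟨u, hu⟩ := hx
  set z := y * ↑u⁻¹ with hz
  have hz0 : z ≠ 0 := by
    intro h
    apply hy0
    have : y * ↑u⁻¹ * ↑u = 0 * ↑u := by rw [← hz, h]
    simpa [mul_assoc] using this
  refine ⟨z.val, ?_, ZMod.val_lt z, ?_⟩
  · rcases Nat.eq_zero_or_pos z.val with h | h
    · exact absurd ((ZMod.val_eq_zero z).1 h) hz0
    · exact h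
  · have hcast : ((z.val : ℕ) : ZMod n) = z := ZMod.natCast_rightInverse z
    rw [nsmul_eq_mul, hcast, hz, ← hu, mul_assoc]
    simp

lemma spg_adj_iff (hn : 2 ≤ n) (x y : ZMod n) :
    (strongPowerGraphZ n).Adj x y ↔
      x ≠ y ∧ ¬(x = 0 ∧ IsUnit y) ∧ ¬(y = 0 ∧ IsUnit x) := by
  haveI : Fact (1 < n) := ⟨hn⟩
  constructor
  · rintro ⟨hne, a, b, ha, ha', hb, hb', hab⟩
    refine ⟨hne, ?_, ?_⟩
    · rintro ⟨rfl, hy⟩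
      rw [smul_zero] at hab
      have : ((b : ℕ) : ZMod n) = 0 := by
        have := hab.symm
        rw [nsmul_eq_mul] at this
        exact (hy.mul_left_eq_zero).1 this
      have := Nat.le_of_dvd hb ((ZMod.natCast_eq_zero_iff b n).1 this)
      omega
    · rintro ⟨rfl, hx⟩
      rw [smul_zero] at hab
      have : ((a : ℕ) : ZMod n) = 0 := by
        rw [nsmul_eq_mul] at hab
        exact (hx.mul_left_eq_zero).1 hab
      have := (ZMod.natCast_eq_zero_iff a n).1 this
      have := Nat.le_of_dvd ha this
      omega
  · rintro ⟨hne, h1, h2⟩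
    refine ⟨hne, ?_⟩
    by_cases hx0 : x = 0
    · subst hx0
      have hy0 : y ≠ 0 := fun h => hne h.symm
      have hyu : ¬ IsUnit y := fun h => h1 ⟨rfl, h⟩
      obtain ⟨b, hb, hb', hby⟩ := spg_ann hn hy0 hyu
      exact ⟨1, b, one_pos, hn, hb, hb', by simp [hby]⟩
    · by_cases hy0 : y = 0
      · subst hy0
        have hxu : ¬ IsUnit x := fun h => h2 ⟨rfl, h⟩
        obtain ⟨a, ha, ha', hax⟩ := spg_ann hn hx0 hxu
        exact ⟨a, 1, ha, ha', one_pos, hn, by simp [hax]⟩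
      · by_cases hxu : IsUnit x
        · obtain ⟨a, ha, ha', hax⟩ := spg_reach hxu hy0
          exact ⟨a, 1, ha, ha', one_pos, hn, by simp [hax]⟩
        · by_cases hyu : IsUnit y
          · obtain ⟨b, hb, hb', hby⟩ := spg_reach hyu hx0
            exact ⟨1, b, one_pos, hn, hb, hb', by simp [hby]⟩
          · obtain ⟨a, ha, ha', hax⟩ := spg_ann hn hx0 hxu
            obtain ⟨b, hb, hb', hby⟩ := spg_ann hn hy0 hyu
            exact ⟨a, b, ha, ha', hb, hb', by rw [hax, hby]⟩

end Adj

section Dist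
variable {n : ℕ} [NeZero n]

lemma spg_not_unit_zero (hn : 2 ≤ n) : ¬ IsUnit (0 : ZMod n) := by
  haveI : Fact (1 < n) := ⟨hn⟩
  rw [isUnit_zero_iff]
  exact fun h => zero_ne_one h

lemma spg_unit_ne_zero (hn : 2 ≤ n) {y : ZMod n} (hy : IsUnit y) : y ≠ 0 := by
  rintro rfl; exact spg_not_unit_zero hn hy

lemma spg_mid (hn : 2 ≤ n) (hnp : ¬ n.Prime) :
    ∃ c : ZMod n, c ≠ 0 ∧ ¬ IsUnit c := by
  have h1 : n ≠ 1 := by omega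
  have hp := Nat.minFac_prime h1
  have hdvd := Nat.minFac_dvd n
  have hlt : n.minFac < n := by
    rcases Nat.lt_or_ge n.minFac n with h | h
    · exact h
    · have : n.minFac = n := Nat.le_antisymm (Nat.le_of_dvd (by omega) hdvd) h
      exact absurd (this ▸ hp) hnp
  refine ⟨(n.minFac : ZMod n), ?_, ?_⟩
  · intro h
    have := Nat.le_of_dvd hp.pos ((ZMod.natCast_eq_zero_iff _ _).1 h)
    omega
  · rw [ZMod.isUnit_iff_coprime]
    intro h
    have : n.minFac ∣ Nat.gcd n.minFac n := Nat.dvd_gcd dvd_rfl hdvd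
    rw [Nat.Coprime] at h
    rw [h] at this
    have := Nat.le_of_dvd one_pos this
    have := hp.two_le
    omega

lemma spg_dist (hn : 2 ≤ n) (hnp : ¬ n.Prime) (x y : ZMod n) :
    (strongPowerGraphZ n).dist x y =
      if x = y then 0
      else if (x = 0 ∧ IsUnit y) ∨ (y = 0 ∧ IsUnit x) then 2 else 1 := by
  classical
  by_cases hxy : x = y
  · simp [hxy]
  rw [if_neg hxy]
  by_cases hbad : (x = 0 ∧ IsUnit y) ∨ (y = 0 ∧ IsUnit x)
  · rw [if_pos hbad]
    obtain ⟨c, hc0, hcu⟩ := spg_mid hn hnp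
    -- wlog-ish: handle two symmetric cases
    have key : ∀ u v : ZMod n, u = 0 → IsUnit v →
        (strongPowerGraphZ n).dist u v = 2 := by
      rintro u v rfl hv
      have hv0 : v ≠ 0 := spg_unit_ne_zero hn hv
      have h1 : (strongPowerGraphZ n).Adj 0 c := by
        rw [spg_adj_iff hn]
        exact ⟨fun h => hc0 h.symm, fun h => hcu h.2, fun h => hc0 h.1⟩
      have h2 : (strongPowerGraphZ n).Adj c v := by
        rw [spg_adj_iff hn]
        refine ⟨fun h => hcu (h ▸ hv), fun h => hc0 h.1, fun h => hv0 h.1⟩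
      have hnadj : ¬ (strongPowerGraphZ n).Adj 0 v := by
        rw [spg_adj_iff hn]
        rintro ⟨-, h, -⟩
        exact h ⟨rfl, hv⟩
      have hne : (0 : ZMod n) ≠ v := fun h => hv0 h.symm
      have hle : (strongPowerGraphZ n).dist 0 v ≤ 2 := by
        have := SimpleGraph.dist_le
          (SimpleGraph.Walk.cons h1 (SimpleGraph.Walk.cons h2 SimpleGraph.Walk.nil))
        simpa using this
      have hpos : 0 < (strongPowerGraphZ n).dist 0 v :=
        SimpleGraph.Reachable.pos_dist_of_ne
          ⟨SimpleGraph.Walk.cons h1 (SimpleGraph.Walk.cons h2 SimpleGraph.Walk.nil)⟩ hne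
      have hne1 : (strongPowerGraphZ n).dist 0 v ≠ 1 := by
        intro h
        exact hnadj (SimpleGraph.dist_eq_one_iff_adj.1 h)
      omega
    rcases hbad with ⟨hx0, hy⟩ | ⟨hy0, hx⟩
    · exact hx0 ▸ key x y hx0 hy
    · rw [SimpleGraph.dist_comm]
      exact key y x hy0 hx
  · rw [if_neg hbad]
    rw [SimpleGraph.dist_eq_one_iff_adj, spg_adj_iff hn]
    push_neg at hbad
    exact ⟨hxy, fun h => (hbad.1 h.1) h.2, fun h => (hbad.2 h.1) h.2⟩

end Dist

lemma eval_charpoly' {m : Type*} [Fintype m] [DecidableEq m] (M : Matrix m m ℝ) (r : ℝ) :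
    M.charpoly.eval r = (r • (1 : Matrix m m ℝ) - M).det := by
  rw [Matrix.charpoly, ← Polynomial.coe_evalRingHom, RingHom.map_det]
  congr 1
  ext i j
  by_cases h : i = j
  · subst h
    simp [Matrix.charmatrix_apply_eq, Matrix.one_apply]
  · simp [Matrix.charmatrix_apply_ne _ _ _ h, Matrix.one_apply, h]

open Classical in
lemma spg_sum_units (n : ℕ) [NeZero n] :
    (∑ z : ZMod n, (if IsUnit z then (1 : ℝ) else 0)) = n.totient := by
  rw [Finset.sum_boole]
  have e : (ZMod n)ˣ ≃ {z : ZMod n // IsUnit z} :=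
    { toFun := fun u => ⟨u, u.isUnit⟩
      invFun := fun z => z.2.unit
      left_inv := fun u => Units.ext u.isUnit.unit_spec
      right_inv := fun z => Subtype.ext z.2.unit_spec }
  have h1 : (Finset.univ.filter (fun z : ZMod n => IsUnit z)).card = n.totient := by
    rw [← Fintype.card_subtype, ← Fintype.card_congr e, ZMod.card_units_eq_totient]
  rw [h1]

set_option maxHeartbeats 2000000 in
open Classical in
lemma spg_charpoly_eval (n : ℕ) [NeZero n] (hn4 : 4 ≤ n) (hnp : ¬ n.Prime)
    (x : ℝ) (hx : x ≠ -1) :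
    (distMatrixZ n).charpoly.eval x =
      (x + 1) ^ (n - 3) * ((x + 1) ^ 3 - n * (x + 1) ^ 2 - 3 * (n.totient : ℝ) * (x + 1)
        + n * n.totient - n.totient - (n.totient : ℝ) ^ 2) := by
  have hn : 2 ≤ n := by omega
  set φR : ℝ := (n.totient : ℝ) with hφR
  set e0 : ZMod n → ℝ := fun z => if z = 0 then 1 else 0 with he0
  set u : ZMod n → ℝ := fun z => if IsUnit z then 1 else 0 with hu
  set U : Matrix (ZMod n) (Fin 3) ℝ := Matrix.of (fun z k => ![(1 : ℝ), e0 z, u z] k) with hU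
  set V : Matrix (Fin 3) (ZMod n) ℝ := Matrix.of (fun k z => ![(1 : ℝ), u z, e0 z] k) with hV
  have hu0 : u 0 = 0 := by simp [hu, spg_not_unit_zero hn]
  have hUV : ∀ i j, (U * V) i j = 1 + e0 i * u j + u i * e0 j := by
    intro i j
    simp [hU, hV, Matrix.mul_apply, Fin.sum_univ_three]
  set s : ℝ := x + 1 with hs
  have hs0 : s ≠ 0 := fun h => hx (by linarith [h])
  -- step 1: x • 1 - D = s • 1 - U * V
  have hM : x • (1 : Matrix (ZMod n) (ZMod n) ℝ) - distMatrixZ n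
      = s • (1 : Matrix (ZMod n) (ZMod n) ℝ) - U * V := by
    ext i j
    have hd : distMatrixZ n i j = if i = j then 0
        else if (i = 0 ∧ IsUnit j) ∨ (j = 0 ∧ IsUnit i) then 2 else 1 := by
      show ((strongPowerGraphZ n).dist i j : ℝ) = _
      rw [spg_dist hn hnp]
      split_ifs <;> norm_num
    rw [Matrix.sub_apply, Matrix.sub_apply, Matrix.smul_apply, Matrix.smul_apply,
      Matrix.one_apply, hUV, hd]
    by_cases hij : i = j
    · subst hij
      have h1 : e0 i * u i = 0 := by
        by_cases h0 : i = 0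
        · simp [hu, h0, spg_not_unit_zero hn]
        · simp [he0, h0]
      have h2 : u i * e0 i = 0 := by
        by_cases h0 : i = 0
        · simp [hu, h0, spg_not_unit_zero hn]
        · simp [he0, h0]
      simp only [if_pos rfl, h1, h2]
      simp [smul_eq_mul]
      ring
    · rw [if_neg hij, if_neg hij]
      by_cases hb : (i = 0 ∧ IsUnit j) ∨ (j = 0 ∧ IsUnit i)
      · rw [if_pos hb]
        rcases hb with ⟨hi0, hj⟩ | ⟨hj0, hi⟩
        · have hj0 : j ≠ 0 := spg_unit_ne_zero hn hj
          simp only [he0, hu, hi0, if_pos rfl, if_pos hj, if_neg hj0,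
            spg_not_unit_zero hn, if_neg (spg_not_unit_zero hn)]
          norm_num
        · have hi0 : i ≠ 0 := spg_unit_ne_zero hn hi
          simp only [he0, hu, hj0, if_pos rfl, if_pos hi, if_neg hi0,
            spg_not_unit_zero hn, if_neg (spg_not_unit_zero hn)]
          norm_num
      · rw [if_neg hb]
        push_neg at hb
        have h1 : e0 i * u j = 0 := by
          by_cases h0 : i = 0
          · simp [hu, if_neg (hb.1 h0)]
          · simp [he0, h0]
        have h2 : u i * e0 j = 0 := by
          by_cases h0 : j = 0
          · simp [hu, if_neg (hb.2 h0)]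
          · simp [he0, h0]
        rw [h1, h2]
        simp [smul_eq_mul, hij]
  -- step 2: V * U explicitly
  have hsum_e0 : (∑ z : ZMod n, e0 z) = 1 := by
    simp [he0]
  have hsum_u : (∑ z : ZMod n, u z) = φR := by
    simp only [hu, hφR]
    exact spg_sum_units n
  have hsum_const : (∑ _z : ZMod n, (1 : ℝ)) = (n : ℝ) := by
    simp [Finset.card_univ, ZMod.card]
  have hmulVU : ∀ k l, (V * U) k l = ∑ z : ZMod n, V k z * U z l := by
    intro k l; rw [Matrix.mul_apply]
  have hV0 : ∀ z, V 0 z = 1 := fun z => rfl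
  have hV1 : ∀ z, V 1 z = u z := fun z => rfl
  have hV2 : ∀ z, V 2 z = e0 z := fun z => rfl
  have hU0 : ∀ z, U z 0 = 1 := fun z => rfl
  have hU1 : ∀ z, U z 1 = e0 z := fun z => rfl
  have hU2 : ∀ z, U z 2 = u z := fun z => rfl
  have hsum_ue0 : (∑ z : ZMod n, u z * e0 z) = 0 := by
    have h : ∀ z : ZMod n, u z * e0 z = if z = 0 then u z else 0 := by
      intro z; by_cases h : z = 0 <;> simp [he0, h]
    rw [Finset.sum_congr rfl fun z _ => h z, Finset.sum_ite_eq' Finset.univ 0 u]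
    simp [hu0]
  have hsum_e0u : (∑ z : ZMod n, e0 z * u z) = 0 := by
    have h : ∀ z : ZMod n, e0 z * u z = u z * e0 z := fun z => mul_comm _ _
    rw [Finset.sum_congr rfl fun z _ => h z, hsum_ue0]
  have hsum_uu : (∑ z : ZMod n, u z * u z) = φR := by
    have h : ∀ z : ZMod n, u z * u z = u z := by
      intro z; by_cases h : IsUnit z <;> simp [hu, h]
    rw [Finset.sum_congr rfl fun z _ => h z, hsum_u]
  have hsum_e0e0 : (∑ z : ZMod n, e0 z * e0 z) = 1 := by
    have h : ∀ z : ZMod n, e0 z * e0 z = e0 z := by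
      intro z; by_cases h : z = 0 <;> simp [he0, h]
    rw [Finset.sum_congr rfl fun z _ => h z, hsum_e0]
  have E00 : (V * U) 0 0 = (n : ℝ) := by
    rw [hmulVU]; simp only [hV0, hU0, mul_one]; exact hsum_const
  have E01 : (V * U) 0 1 = 1 := by
    rw [hmulVU]; simp only [hV0, hU1, one_mul]; exact hsum_e0
  have E02 : (V * U) 0 2 = φR := by
    rw [hmulVU]; simp only [hV0, hU2, one_mul]; exact hsum_u
  have E10 : (V * U) 1 0 = φR := by
    rw [hmulVU]; simp only [hV1, hU0, mul_one]; exact hsum_u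
  have E11 : (V * U) 1 1 = 0 := by
    rw [hmulVU]; simp only [hV1, hU1]; exact hsum_ue0
  have E12 : (V * U) 1 2 = φR := by
    rw [hmulVU]; simp only [hV1, hU2]; exact hsum_uu
  have E20 : (V * U) 2 0 = 1 := by
    rw [hmulVU]; simp only [hV2, hU0, mul_one]; exact hsum_e0
  have E21 : (V * U) 2 1 = 1 := by
    rw [hmulVU]; simp only [hV2, hU1]; exact hsum_e0e0
  have E22 : (V * U) 2 2 = 0 := by
    rw [hmulVU]; simp only [hV2, hU2]; exact hsum_e0u
  -- step 3: determinant chain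
  have key1 : s • (1 : Matrix (ZMod n) (ZMod n) ℝ) - U * V
      = s • ((1 : Matrix (ZMod n) (ZMod n) ℝ) - s⁻¹ • (U * V)) := by
    rw [smul_sub, smul_smul, mul_inv_cancel₀ hs0, one_smul]
  have key2 : (1 : Matrix (ZMod n) (ZMod n) ℝ) - s⁻¹ • (U * V)
      = 1 + ((-s⁻¹) • U) * V := by
    rw [Matrix.smul_mul, neg_smul, ← sub_eq_add_neg]
  have key3 : (1 : Matrix (Fin 3) (Fin 3) ℝ) + V * ((-s⁻¹) • U)
      = s⁻¹ • (s • (1 : Matrix (Fin 3) (Fin 3) ℝ) - V * U) := by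
    rw [Matrix.mul_smul, neg_smul, ← sub_eq_add_neg, smul_sub, smul_smul,
      inv_mul_cancel₀ hs0, one_smul]
  have hF : ∀ k l : Fin 3, (s • (1 : Matrix (Fin 3) (Fin 3) ℝ) - V * U) k l
      = s * (if k = l then 1 else 0) - (V * U) k l := by
    intro k l
    rw [Matrix.sub_apply, Matrix.smul_apply, Matrix.one_apply]
    simp [smul_eq_mul]
  have hdet3 : (s • (1 : Matrix (Fin 3) (Fin 3) ℝ) - V * U).det
      = s ^ 3 - n * s ^ 2 - 3 * φR * s + n * φR - φR - φR ^ 2 := by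
    rw [Matrix.det_fin_three]
    rw [hF 0 0, hF 0 1, hF 0 2, hF 1 0, hF 1 1, hF 1 2, hF 2 0, hF 2 1, hF 2 2,
      E00, E01, E02, E10, E11, E12, E20, E21, E22]
    simp only [Fin.reduceEq, reduceIte]
    ring
  calc (distMatrixZ n).charpoly.eval x
      = (x • (1 : Matrix (ZMod n) (ZMod n) ℝ) - distMatrixZ n).det := eval_charpoly' _ _
    _ = (s • ((1 : Matrix (ZMod n) (ZMod n) ℝ) - s⁻¹ • (U * V))).det := by
        rw [hM, key1]
    _ = s ^ n * ((1 : Matrix (ZMod n) (ZMod n) ℝ) - s⁻¹ • (U * V)).det := by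
        rw [Matrix.det_smul, ZMod.card]
    _ = s ^ n * ((1 : Matrix (Fin 3) (Fin 3) ℝ) + V * ((-s⁻¹) • U)).det := by
        rw [key2, Matrix.det_one_add_mul_comm]
    _ = s ^ n * ((s⁻¹) ^ 3 * (s • (1 : Matrix (Fin 3) (Fin 3) ℝ) - V * U).det) := by
        rw [key3, Matrix.det_smul, Fintype.card_fin]
    _ = (x + 1) ^ (n - 3) * ((x + 1) ^ 3 - n * (x + 1) ^ 2 - 3 * φR * (x + 1)
        + n * φR - φR - φR ^ 2) := by
        rw [hdet3, show n = (n - 3) + 3 by omega]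
        have h3 : s ^ (n - 3 + 3) = s ^ (n - 3) * s ^ 3 := pow_add s _ 3
        rw [h3, ← hs]
        field_simp
        simp only [Nat.add_sub_cancel]
        ring

open Polynomial in
set_option maxHeartbeats 1000000 in
/-- For a composite number `n`, with `θ = arccos((2n³+27φ(n)²+27φ(n))/(2√((n²+9φ(n))³)))`,
we have `0 < θ < π/2`, and the roots of the distance characteristic polynomial of the
strong power graph of `ZMod n` are `-1` with multiplicity `n-3` together with the three
pairwise distinct simple roots `(n-3+2cos((θ+2kπ)/3)√(n²+9φ(n)))/3`, `k = 0, 1, -1`. -/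
theorem distMatrixZ_roots (n : ℕ) [NeZero n] (hn : 2 ≤ n) (hnp : ¬ n.Prime)
    (θ r₁ r₂ r₃ : ℝ)
    (hθ : θ = Real.arccos ((2 * (n : ℝ) ^ 3 + 27 * (n.totient : ℝ) ^ 2 + 27 * (n.totient : ℝ)) /
      (2 * Real.sqrt (((n : ℝ) ^ 2 + 9 * (n.totient : ℝ)) ^ 3))))
    (hr₁ : r₁ = ((n : ℝ) - 3 + 2 * Real.cos (θ / 3) *
      Real.sqrt ((n : ℝ) ^ 2 + 9 * (n.totient : ℝ))) / 3)
    (hr₂ : r₂ = ((n : ℝ) - 3 + 2 * Real.cos ((θ + 2 * Real.pi) / 3) *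
      Real.sqrt ((n : ℝ) ^ 2 + 9 * (n.totient : ℝ))) / 3)
    (hr₃ : r₃ = ((n : ℝ) - 3 + 2 * Real.cos ((θ - 2 * Real.pi) / 3) *
      Real.sqrt ((n : ℝ) ^ 2 + 9 * (n.totient : ℝ))) / 3) :
    (0 < θ ∧ θ < Real.pi / 2) ∧
    (r₁ ≠ r₂ ∧ r₁ ≠ r₃ ∧ r₂ ≠ r₃) ∧ (r₁ ≠ -1 ∧ r₂ ≠ -1 ∧ r₃ ≠ -1) ∧
    (distMatrixZ n).charpoly.roots = Multiset.replicate (n - 3) (-1) + {r₁, r₂, r₃} := by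
  have hn4 : 4 ≤ n := by
    rcases Nat.lt_or_ge n 4 with h | h
    · interval_cases n
      · exact absurd Nat.prime_two hnp
      · exact absurd Nat.prime_three hnp
    · exact h
  have hφ1 : 1 ≤ n.totient := Nat.totient_pos.2 (by omega)
  have hφlt : n.totient < n := Nat.totient_lt n (by omega)
  have hφne : n.totient ≠ n - 1 := fun h => hnp ((Nat.totient_eq_iff_prime (by omega)).1 h)
  have hφn2 : n.totient ≤ n - 2 := by omega
  -- real versions
  have hnR : (4 : ℝ) ≤ (n : ℝ) := by exact_mod_cast hn4
  have hφR1 : (1 : ℝ) ≤ (n.totient : ℝ) := by exact_mod_cast hφ1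
  have hφRn : (n.totient : ℝ) ≤ (n : ℝ) - 2 := by
    have h2 : (n.totient : ℝ) ≤ ((n - 2 : ℕ) : ℝ) := by exact_mod_cast hφn2
    rwa [Nat.cast_sub (by omega)] at h2
  set nR : ℝ := (n : ℝ) with hnRdef
  set φR : ℝ := (n.totient : ℝ) with hφRdef
  set K : ℝ := nR ^ 2 + 9 * φR with hK
  set P : ℝ := 2 * nR ^ 3 + 27 * φR ^ 2 + 27 * φR with hPdef
  have hK0 : 0 < K := by rw [hK]; nlinarith
  have hP0 : 0 < P := by rw [hPdef]; nlinarith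
  set s : ℝ := Real.sqrt K with hsdef
  have hs0 : 0 < s := Real.sqrt_pos.2 hK0
  have hsq : s ^ 2 = K := Real.sq_sqrt hK0.le
  have hΔ : P ^ 2 < 4 * K ^ 3 := by
    have expand : 4 * K ^ 3 - P ^ 2 = 108 * nR ^ 3 * φR * (nR - φR - 1)
        + 972 * nR ^ 2 * φR ^ 2 - 729 * φR ^ 2 * (φR - 1) ^ 2 := by
      rw [hK, hPdef]; ring
    have h1 : (1 : ℝ) ≤ nR - φR - 1 := by linarith
    have e1 : 0 ≤ 108 * nR ^ 3 * φR * (nR - φR - 1) := by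
      apply mul_nonneg (by positivity) (by linarith)
    have e2 : (φR - 1) ^ 2 ≤ nR ^ 2 := by nlinarith
    have e3 : 729 * φR ^ 2 * (φR - 1) ^ 2 ≤ 729 * φR ^ 2 * nR ^ 2 := by
      apply mul_le_mul_of_nonneg_left e2 (by positivity)
    have e4 : (0 : ℝ) < 243 * nR ^ 2 * φR ^ 2 := by positivity
    linarith [e1, e3, e4]
  have hsqK3 : Real.sqrt (K ^ 3) = s ^ 3 := by
    have h : K ^ 3 = (s ^ 3) ^ 2 := by rw [← hsq]; ring
    rw [h, Real.sqrt_sq (by positivity)]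
  have h4K : (2 * s ^ 3) ^ 2 = 4 * K ^ 3 := by rw [← hsq]; ring
  have hPlt : P < 2 * s ^ 3 :=
    lt_of_pow_lt_pow_left₀ 2 (by positivity) (by rw [h4K]; exact hΔ)
  have harg1 : P / (2 * Real.sqrt (K ^ 3)) < 1 := by
    rw [hsqK3]
    rw [div_lt_one (by positivity)]
    exact hPlt
  have harg0 : 0 < P / (2 * Real.sqrt (K ^ 3)) := by
    rw [hsqK3]; positivity
  have hθ0 : 0 < θ := by rw [hθ]; exact Real.arccos_pos.2 harg1
  have hθ2 : θ < Real.pi / 2 := by rw [hθ]; exact Real.arccos_lt_pi_div_two.2 harg0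
  have hcos : Real.cos θ = P / (2 * s ^ 3) := by
    rw [hθ, Real.cos_arccos (by linarith : (-1:ℝ) ≤ _) harg1.le, hsqK3]
  have hcosP : Real.cos θ * (2 * s ^ 3) = P := by
    rw [hcos]; field_simp
  -- trig
  have hπ := Real.pi_pos
  set a : ℝ := θ / 3 with ha
  set ca : ℝ := Real.cos a with hca
  set sa : ℝ := Real.sin a with hsa
  set t3 : ℝ := Real.sqrt 3 with ht3def
  have ht3 : t3 ^ 2 = 3 := Real.sq_sqrt (by norm_num)
  set cb : ℝ := Real.cos ((θ + 2 * Real.pi) / 3) with hcb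
  set cc : ℝ := Real.cos ((θ - 2 * Real.pi) / 3) with hcc
  have hc2eq : cb = -(1 / 2) * ca - t3 / 2 * sa := by
    rw [hcb, show (θ + 2 * Real.pi) / 3 = a + (Real.pi - Real.pi / 3) by rw [ha]; ring,
      Real.cos_add, Real.cos_pi_sub, Real.cos_pi_div_three, Real.sin_pi_sub,
      Real.sin_pi_div_three, hca, hsa, ht3def]
    ring
  have hc3eq : cc = -(1 / 2) * ca + t3 / 2 * sa := by
    rw [hcc, show (θ - 2 * Real.pi) / 3 = a - (Real.pi - Real.pi / 3) by rw [ha]; ring,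
      Real.cos_sub, Real.cos_pi_sub, Real.cos_pi_div_three, Real.sin_pi_sub,
      Real.sin_pi_div_three, hca, hsa, ht3def]
    ring
  have hpy : sa ^ 2 = 1 - ca ^ 2 := by
    rw [hsa, hca]
    have := Real.sin_sq_add_cos_sq a
    linarith
  have htrip : Real.cos θ = 4 * ca ^ 3 - 3 * ca := by
    rw [show θ = 3 * a by rw [ha]; ring, Real.cos_three_mul, hca]
  have he1 : ca + cb + cc = 0 := by rw [hc2eq, hc3eq]; ring
  have he2 : ca * cb + ca * cc + cb * cc = -(3 / 4) := by
    rw [hc2eq, hc3eq]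
    linear_combination (-(sa ^ 2) / 4) * ht3 + (-(3 : ℝ) / 4) * hpy
  have he3 : ca * cb * cc = Real.cos θ / 4 := by
    rw [hc2eq, hc3eq, htrip]
    linear_combination (-(ca * sa ^ 2) / 4) * ht3 + (-(3 : ℝ) / 4 * ca) * hpy
  -- symmetric functions of the roots
  have hsum : r₁ + r₂ + r₃ = nR - 3 := by
    rw [hr₁, hr₂, hr₃]
    linear_combination (2 * s / 3) * he1
  have hsym2 : r₁ * r₂ + r₁ * r₃ + r₂ * r₃ = 3 - 2 * nR - 3 * φR := by
    rw [hr₁, hr₂, hr₃]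
    linear_combination (4 * (nR - 3) * s / 9) * he1 + (4 * s ^ 2 / 9) * he2
      + (-(1 : ℝ) / 3) * hsq
  have hsym3 : r₁ * r₂ * r₃ = φR ^ 2 + (4 - nR) * φR + nR - 1 := by
    rw [hr₁, hr₂, hr₃]
    linear_combination (2 * s * (nR - 3) ^ 2 / 27) * he1 + (4 * s ^ 2 * (nR - 3) / 27) * he2
      + (8 * s ^ 3 / 27) * he3 + (-(nR - 3) / 9) * hsq + ((1 : ℝ) / 27) * hcosP
  have hcubic : ∀ y : ℝ, (y - r₁) * (y - r₂) * (y - r₃)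
      = y ^ 3 - (nR - 3) * y ^ 2 + (3 - 2 * nR - 3 * φR) * y
        - (φR ^ 2 + (4 - nR) * φR + nR - 1) := by
    intro y
    linear_combination (-(y ^ 2)) * hsum + y * hsym2 + (-1 : ℝ) * hsym3
  -- ordering of the cosines
  have hbc : cb < cc := by
    rw [hcb, hcc, show (θ - 2 * Real.pi) / 3 = -((2 * Real.pi - θ) / 3) by ring, Real.cos_neg]
    apply Real.cos_lt_cos_of_nonneg_of_le_pi (by linarith) (by linarith) (by linarith)
  have hcaa : cc < ca := by
    rw [hca, hcc, show (θ - 2 * Real.pi) / 3 = -((2 * Real.pi - θ) / 3) by ring, Real.cos_neg,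
      ha]
    apply Real.cos_lt_cos_of_nonneg_of_le_pi (by linarith) (by linarith) (by linarith)
  have hr23 : r₂ < r₃ := by
    rw [hr₂, hr₃]
    have := mul_lt_mul_of_pos_right hbc hs0
    rw [hcb, hcc] at this
    linarith
  have hr31 : r₃ < r₁ := by
    rw [hr₃, hr₁]
    have := mul_lt_mul_of_pos_right hcaa hs0
    rw [hca, hcc, ha] at this
    linarith
  have hne12 : r₁ ≠ r₂ := ne_of_gt (lt_trans hr23 hr31)
  have hne13 : r₁ ≠ r₃ := ne_of_gt hr31
  have hne23 : r₂ ≠ r₃ := ne_of_lt hr23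
  -- roots are not -1
  have hposval : 0 < (-1 - r₁) * (-1 - r₂) * (-1 - r₃) := by
    rw [hcubic (-1)]
    have h := mul_pos (by linarith : (0:ℝ) < φR) (by linarith : (0:ℝ) < nR - φR - 1)
    linarith [h]
  have hne1 : r₁ ≠ -1 := by
    intro h; rw [h] at hposval; norm_num at hposval
  have hne2 : r₂ ≠ -1 := by
    intro h; rw [h] at hposval; norm_num at hposval
  have hne3 : r₃ ≠ -1 := by
    intro h; rw [h] at hposval; norm_num at hposval
  refine ⟨⟨hθ0, hθ2⟩, ⟨hne12, hne13, hne23⟩, ⟨hne1, hne2, hne3⟩, ?_⟩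
  -- the characteristic polynomial
  set pR : Polynomial ℝ :=
    (X - C (-1)) ^ (n - 3) * ((X - C r₁) * (X - C r₂) * (X - C r₃)) with hpR
  have hmon : pR.Monic := by
    exact ((monic_X_sub_C (-1)).pow _).mul
      (((monic_X_sub_C r₁).mul (monic_X_sub_C r₂)).mul (monic_X_sub_C r₃))
  have heq : (distMatrixZ n).charpoly = pR := by
    apply Polynomial.eq_of_infinite_eval_eq
    apply Set.Infinite.mono (s := {(-1 : ℝ)}ᶜ)
    · intro x hx
      have hxne : x ≠ -1 := hx
      have hev := spg_charpoly_eval n hn4 hnp x hxne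
      show (distMatrixZ n).charpoly.eval x = pR.eval x
      rw [hev, hpR]
      simp only [eval_mul, eval_pow, eval_sub, eval_X, eval_C]
      rw [hcubic x]
      ring
    · exact Set.Finite.infinite_compl (Set.finite_singleton _)
  rw [heq, hpR]
  have hq0 : ((X - C r₁) * (X - C r₂) * (X - C r₃) : Polynomial ℝ) ≠ 0 :=
    (((monic_X_sub_C r₁).mul (monic_X_sub_C r₂)).mul (monic_X_sub_C r₃)).ne_zero
  have hp0 : ((X - C (-1) : Polynomial ℝ)) ^ (n - 3) ≠ 0 :=
    ((monic_X_sub_C (-1)).pow _).ne_zero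
  rw [Polynomial.roots_mul (mul_ne_zero hp0 hq0), Polynomial.roots_pow,
    Polynomial.roots_mul (mul_ne_zero (mul_ne_zero (monic_X_sub_C r₁).ne_zero
      (monic_X_sub_C r₂).ne_zero) (monic_X_sub_C r₃).ne_zero),
    Polynomial.roots_mul (mul_ne_zero (monic_X_sub_C r₁).ne_zero (monic_X_sub_C r₂).ne_zero),
    Polynomial.roots_X_sub_C, Polynomial.roots_X_sub_C, Polynomial.roots_X_sub_C,
    Polynomial.roots_X_sub_C, Multiset.nsmul_singleton]
  rfl
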